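/- Let n ≥ 2 and let 0 = r_0 < r_1 < ... < r_t < r_{t+1} = n be integers, with δ_i = r_{t+1−i} − r_{t−i} for 0 ≤ i ≤ t. Define f_0(x) = x^{1+q^{r_1}+...+q^{r_t}} and f_i(x) = f_{i−1}(x)^{q^{δ_{i−1}}} mod (x^{q^n} − x). If δ_0 ≤ δ_1 ≤ ... ≤ δ_t, then the polynomial f(x) = Σ_{e ∈ I} T_{δ_e}(f_e(x)) (where I indexes the distinct f_i and T_k is the trace polynomial) has degree q^{r_1−1} + q^{r_2−1} + ... + q^{r_t−1} + q^{n−1}. -/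

import Mathlib

/-- The iterated polynomials `f₀ = f0`, `f_{i+1} = f_i^{q^{δ_i}} mod (x^{q^n} − x)`. -/
noncomputable def fseq (q n : ℕ) {F : Type*} [Field F] (f0 : Polynomial F) (δ : ℕ → ℕ) : ℕ → Polynomial F
  | 0 => f0
  | i + 1 => (fseq q n f0 δ i ^ q ^ δ i) %ₘ (Polynomial.X ^ q ^ n - Polynomial.X)

lemma aux_geom_lt (q m : ℕ) (hq : 2 ≤ q) : ∑ k ∈ Finset.range m, q ^ k < q ^ m := by
  induction m with
  | zero => simp
  | succ m ih =>
    rw [Finset.sum_range_succ, pow_succ]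
    nlinarith [pow_pos (show 0 < q by omega) m]

lemma aux_sum_pow_lt (q m : ℕ) (hq : 2 ≤ q) (s : Finset ℕ) (hs : ∀ x ∈ s, x < m) :
    ∑ x ∈ s, q ^ x < q ^ m :=
  lt_of_le_of_lt
    (Finset.sum_le_sum_of_subset (fun x hx => Finset.mem_range.mpr (hs x hx)))
    (aux_geom_lt q m hq)

lemma aux_sum_pow_inj (q : ℕ) (hq : 2 ≤ q) :
    ∀ m (s u : Finset ℕ), (∀ x ∈ s, x < m) → (∀ x ∈ u, x < m) →
      (∑ x ∈ s, q ^ x) = (∑ x ∈ u, q ^ x) → s = u := by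
  intro m
  induction m with
  | zero =>
    intro s u hs hu _
    have h1 : s = ∅ := Finset.eq_empty_of_forall_notMem (fun x hx => by exact absurd (hs x hx) (by omega))
    have h2 : u = ∅ := Finset.eq_empty_of_forall_notMem (fun x hx => by exact absurd (hu x hx) (by omega))
    rw [h1, h2]
  | succ m ih =>
    intro s u hs hu h
    have key : ∀ s u : Finset ℕ, (∀ x ∈ s, x < m + 1) → (∀ x ∈ u, x < m + 1) →
        (∑ x ∈ s, q ^ x) = (∑ x ∈ u, q ^ x) → m ∈ s → m ∈ u := by
      intro s u hs hu h hm
      by_contra hmu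
      have h1 : q ^ m ≤ ∑ x ∈ s, q ^ x := Finset.single_le_sum (fun i _ => Nat.zero_le _) hm
      have h2 : ∑ x ∈ u, q ^ x < q ^ m := by
        apply aux_sum_pow_lt q m hq
        intro x hx
        have := hu x hx
        rcases Nat.lt_succ_iff_lt_or_eq.mp this with h' | h'
        · exact h'
        · exact absurd (h' ▸ hx) hmu
      omega
    by_cases hm : m ∈ s
    · have hmu : m ∈ u := key s u hs hu h hm
      have hs' : ∑ x ∈ s, q ^ x = q ^ m + ∑ x ∈ s.erase m, q ^ x :=
        (Finset.add_sum_erase s _ hm).symm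
      have hu' : ∑ x ∈ u, q ^ x = q ^ m + ∑ x ∈ u.erase m, q ^ x :=
        (Finset.add_sum_erase u _ hmu).symm
      have : s.erase m = u.erase m := by
        apply ih
        · intro x hx
          have := hs x (Finset.mem_of_mem_erase hx)
          have := Finset.ne_of_mem_erase hx
          omega
        · intro x hx
          have := hu x (Finset.mem_of_mem_erase hx)
          have := Finset.ne_of_mem_erase hx
          omega
        · omega
      calc s = insert m (s.erase m) := (Finset.insert_erase hm).symm
        _ = insert m (u.erase m) := by rw [this]
        _ = u := Finset.insert_erase hmu
    · have hmu : m ∉ u := fun hx => hm (key u s hu hs h.symm hx)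
      apply ih
      · intro x hx
        have := hs x hx; rcases Nat.lt_succ_iff_lt_or_eq.mp this with h' | h'
        · exact h'
        · exact absurd (h' ▸ hx) hm
      · intro x hx
        have := hu x hx; rcases Nat.lt_succ_iff_lt_or_eq.mp this with h' | h'
        · exact h'
        · exact absurd (h' ▸ hx) hmu
      · exact h

open Polynomial in
lemma aux_X_pow_modByMonic {F : Type*} [Field F] (Q : ℕ) (hQ : 2 ≤ Q) (a b : ℕ)
    (hb1 : 1 ≤ b) (hbQ : b < Q) (hba : b ≤ a) (hdvd : (Q - 1) ∣ (a - b)) :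
    (X ^ a : Polynomial F) %ₘ (X ^ Q - X) = X ^ b := by
  have hmonic : (X ^ Q - X : Polynomial F).Monic := by
    apply monic_X_pow_sub
    rw [degree_X]
    exact_mod_cast Nat.one_lt_cast.mpr (by omega)
  have hdeg : (X ^ Q - X : Polynomial F).degree = Q := by
    rw [degree_sub_eq_left_of_degree_lt]
    · exact degree_X_pow Q
    · rw [degree_X_pow, degree_X]
      exact_mod_cast Nat.one_lt_cast.mpr (by omega)
  obtain ⟨k, hk⟩ := hdvd
  have hQ1 : Q - 1 + 1 = Q := by omega
  have hfac : (X ^ Q - X : Polynomial F) = X * (X ^ (Q - 1) - 1) := by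
    rw [mul_sub, mul_one, ← pow_succ', hQ1]
  have hdvd2 : (X ^ Q - X : Polynomial F) ∣ X ^ a - X ^ b := by
    rw [hfac]
    have hab : b + (a - b) = a := by omega
    have h1 : (X ^ a - X ^ b : Polynomial F) = X ^ b * (X ^ (a - b) - 1) := by
      rw [mul_sub, mul_one, ← pow_add, hab]
    rw [h1]
    apply mul_dvd_mul
    · exact dvd_pow_self X (by omega)
    · rw [hk, pow_mul]
      have := sub_dvd_pow_sub_pow (X ^ (Q - 1) : Polynomial F) 1 k
      simpa using this
  rw [Polynomial.modByMonic_eq_of_dvd_sub hmonic hdvd2,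
    (Polynomial.modByMonic_eq_self_iff hmonic).mpr]
  rw [hdeg, degree_X_pow]
  exact_mod_cast Nat.cast_lt.mpr hbQ

/-- position of the j-th digit of the exponent of `fseq i` -/
def posA (n t : ℕ) (r : ℕ → ℕ) (i j : ℕ) : ℕ := (r j + (n - r (t + 1 - i))) % n

/-- the exponent of `fseq i` -/
def MA (q n t : ℕ) (r : ℕ → ℕ) (i : ℕ) : ℕ :=
  ∑ j ∈ Finset.range (t + 1), q ^ posA n t r i j

/-- Bundle of arithmetic context facts. -/
structure Ctx (q n t : ℕ) (r δ : ℕ → ℕ) : Prop where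
  hq : 2 ≤ q
  hn : 1 ≤ n
  hr0 : r 0 = 0
  hrt : r (t + 1) = n
  hrmono : ∀ j ≤ t, r j < r (j + 1)
  hδ : ∀ i ≤ t, δ i = r (t + 1 - i) - r (t - i)

namespace Ctx

variable {q n t : ℕ} {r δ : ℕ → ℕ} (C : Ctx q n t r δ)
include C

lemma r_lt : ∀ j k, j < k → k ≤ t + 1 → r j < r k := by
  intro j k hjk hk
  induction k with
  | zero => omega
  | succ k ih =>
    rcases Nat.lt_succ_iff_lt_or_eq.mp hjk with h | h
    · exact lt_trans (ih h (by omega)) (C.hrmono k (by omega))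
    · subst h; exact C.hrmono j (by omega)

lemma r_le : ∀ j k, j ≤ k → k ≤ t + 1 → r j ≤ r k := by
  intro j k hjk hk
  rcases Nat.lt_or_ge j k with h | h
  · exact le_of_lt (C.r_lt j k h hk)
  · have : j = k := by omega
    rw [this]

lemma r_inj : ∀ j k, j ≤ t → k ≤ t → r j = r k → j = k := by
  intro j k hj hk h
  by_contra hne
  rcases Nat.lt_or_ge j k with h' | h'
  · exact absurd h (Nat.ne_of_lt (C.r_lt j k h' (by omega)))
  · have : k < j := by omega
    exact absurd h.symm (Nat.ne_of_lt (C.r_lt k j (by omega) (by omega)))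

lemma r_lt_n : ∀ j ≤ t, r j < n := fun j hj => C.hrt ▸ C.r_lt j (t+1) (by omega) le_rfl

lemma r_le_n : ∀ j ≤ t + 1, r j ≤ n := fun j hj => C.hrt ▸ C.r_le j (t+1) hj le_rfl

lemma δ_add : ∀ k ≤ t, r (t - k) + δ k = r (t + 1 - k) := by
  intro k hk
  have h1 := C.hδ k hk
  have h2 : r (t - k) < r (t + 1 - k) := by
    have h : t + 1 - k = (t - k) + 1 := by omega
    rw [h]; exact C.hrmono (t - k) (by omega)
  omega

lemma δ_pos : ∀ k ≤ t, 1 ≤ δ k := by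
  intro k hk
  have h1 := C.δ_add k hk
  have h2 : r (t - k) < r (t + 1 - k) := by
    have h : t + 1 - k = (t - k) + 1 := by omega
    rw [h]; exact C.hrmono (t - k) (by omega)
  omega

lemma rδ_sum : ∀ l ≤ t + 1, r (t + 1 - l) + ∑ k ∈ Finset.range l, δ k = n := by
  intro l hl
  induction l with
  | zero => simpa using C.hrt
  | succ l ih =>
    have h1 := ih (by omega)
    have h2 := C.δ_add l (by omega)
    have h3 : t + 1 - (l + 1) = t - l := by omega
    rw [Finset.sum_range_succ, h3]
    omega

lemma pos_lt (i j : ℕ) : posA n t r i j < n := Nat.mod_lt _ (by have := C.hn; omega)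

lemma pos_low {i j : ℕ} (hi : i ≤ t) (hj : j ≤ t - i) :
    posA n t r i j + r (t + 1 - i) = r j + n := by
  have h1 : r j < r (t + 1 - i) := C.r_lt j (t + 1 - i) (by omega) (by omega)
  have h2 : r (t + 1 - i) ≤ n := C.r_le_n _ (by omega)
  have h3 : r j + (n - r (t + 1 - i)) < n := by omega
  unfold posA
  rw [Nat.mod_eq_of_lt h3]
  omega

lemma pos_high' {i j : ℕ} (hi : i ≤ t) (hj1 : t - i < j) (hj2 : j ≤ t) :
    posA n t r i j + r (t + 1 - i) = r j := by
  have h1 : r (t + 1 - i) ≤ r j := C.r_le (t + 1 - i) j (by omega) (by omega)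
  have h2 : r (t + 1 - i) ≤ n := C.r_le_n _ (by omega)
  have h4 : r j < n := C.r_lt_n j hj2
  have h3 : r j + (n - r (t + 1 - i)) = (r j - r (t + 1 - i)) + n := by omega
  unfold posA
  rw [h3, Nat.add_mod_right, Nat.mod_eq_of_lt (by omega)]
  omega

lemma pos_inj {i j k : ℕ} (hj : j ≤ t) (hk : k ≤ t)
    (h : posA n t r i j = posA n t r i k) : j = k := by
  unfold posA at h
  have h1 : r j % n = r k % n :=
    Nat.ModEq.add_right_cancel' (n - r (t + 1 - i)) (h : _ ≡ _ [MOD n])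
  rw [Nat.mod_eq_of_lt (C.r_lt_n j hj), Nat.mod_eq_of_lt (C.r_lt_n k hk)] at h1
  exact C.r_inj j k hj hk h1

lemma pos_top {i : ℕ} (hi : i ≤ t) : posA n t r i (t - i) + δ i = n := by
  have h1 := C.pos_low hi (le_refl (t - i))
  have h2 := C.δ_add i hi
  omega

lemma pos_le {i j : ℕ} (hi : i ≤ t) (hj : j ≤ t) : posA n t r i j + δ i ≤ n := by
  rcases le_or_gt j (t - i) with h | h
  · have h1 := C.pos_low hi h
    have h2 := C.δ_add i hi
    have h3 : r j ≤ r (t - i) := C.r_le j (t - i) h (by omega)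
    have h5 : r (t + 1 - i) ≤ n := C.r_le_n _ (by omega)
    omega
  · have h1 := C.pos_high' hi h hj
    have h2 := C.δ_add i hi
    have h4 : r j < n := C.r_lt_n j hj
    omega

lemma pos_zero {i : ℕ} (hi : i ≤ t) :
    posA n t r i (if i = 0 then 0 else t + 1 - i) = 0 := by
  by_cases h : i = 0
  · subst h
    rw [if_pos rfl]
    unfold posA
    rw [Nat.sub_zero, C.hrt, C.hr0, Nat.sub_self, Nat.add_zero, Nat.zero_mod]
  · simp only [if_neg h]
    unfold posA
    have h2 : r (t + 1 - i) ≤ n := C.r_le_n _ (by omega)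
    have h3 : r (t + 1 - i) + (n - r (t + 1 - i)) = n := by omega
    rw [h3]
    exact Nat.mod_self n



lemma M_pos (i : ℕ) : 1 ≤ MA q n t r i := by
  have h0 : (0:ℕ) ∈ Finset.range (t + 1) := Finset.mem_range.mpr (by omega)
  have h1 : 1 ≤ q ^ posA n t r i 0 := Nat.one_le_pow _ _ (by have := C.hq; omega)
  unfold MA
  calc 1 ≤ q ^ posA n t r i 0 := h1
    _ ≤ _ := Finset.single_le_sum (f := fun j => q ^ posA n t r i j) (fun j _ => Nat.zero_le _) h0

lemma M_lt_pow {i : ℕ} (hi : i ≤ t) : MA q n t r i < q ^ (n + 1 - δ i) := by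
  have hinj : Set.InjOn (posA n t r i) (Finset.range (t + 1)) := by
    intro a ha b hb hab
    exact C.pos_inj (by simpa using Finset.mem_range.mp ha |>.le.trans (le_refl _) |> fun _ => Nat.lt_succ_iff.mp (Finset.mem_range.mp ha)) (Nat.lt_succ_iff.mp (Finset.mem_range.mp hb)) hab
  rw [show MA q n t r i = ∑ x ∈ (Finset.range (t+1)).image (posA n t r i), q ^ x from
    (Finset.sum_image (fun a ha b hb hab => hinj ha hb hab)).symm]
  apply aux_sum_pow_lt q _ C.hq
  intro x hx
  obtain ⟨j, hj, hjx⟩ := Finset.mem_image.mp hx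
  have hj' : j ≤ t := Nat.lt_succ_iff.mp (Finset.mem_range.mp hj)
  have := C.pos_le hi hj'
  have := C.δ_pos i hi
  omega

lemma M_lt_Q {i : ℕ} (hi : i ≤ t) : MA q n t r i < q ^ n := by
  have h1 := C.M_lt_pow hi
  have h2 := C.δ_pos i hi
  calc MA q n t r i < q ^ (n + 1 - δ i) := h1
    _ ≤ q ^ n := Nat.pow_le_pow_right (by have := C.hq; omega) (by omega)

lemma M_mod {i : ℕ} (hi : i ≤ t) : MA q n t r i % q = 1 := by
  set j₀ := if i = 0 then 0 else t + 1 - i with hj₀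
  have hj₀mem : j₀ ∈ Finset.range (t + 1) := by
    rw [hj₀]; split <;> (apply Finset.mem_range.mpr; omega)
  have hsplit : MA q n t r i = q ^ posA n t r i j₀ +
      ∑ j ∈ (Finset.range (t+1)).erase j₀, q ^ posA n t r i j :=
    (Finset.add_sum_erase _ _ hj₀mem).symm
  have hz : posA n t r i j₀ = 0 := C.pos_zero hi
  have hdvd : q ∣ ∑ j ∈ (Finset.range (t+1)).erase j₀, q ^ posA n t r i j := by
    apply Finset.dvd_sum
    intro j hj
    have hjne : j ≠ j₀ := Finset.ne_of_mem_erase hj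
    have hjt : j ≤ t := Nat.lt_succ_iff.mp (Finset.mem_range.mp (Finset.mem_of_mem_erase hj))
    have hj₀t : j₀ ≤ t := Nat.lt_succ_iff.mp (Finset.mem_range.mp hj₀mem)
    have hne : posA n t r i j ≠ 0 := by
      intro h0
      exact hjne (C.pos_inj hjt hj₀t (by rw [h0, hz]))
    exact dvd_pow_self q hne
  obtain ⟨s, hs⟩ := hdvd
  rw [hsplit, hz, pow_zero, hs, Nat.add_mul_mod_self_left]
  exact Nat.one_mod_eq_one.mpr (by have := C.hq; omega)

lemma pos_step {i : ℕ} (hi : i + 1 ≤ t) (j : ℕ) :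
    posA n t r (i + 1) j = (posA n t r i j + δ i) % n := by
  have h1 : t + 1 - (i + 1) = t - i := by omega
  have h2 := C.δ_add i (by omega)
  have h3 : r (t + 1 - i) ≤ n := C.r_le_n _ (by omega)
  have h4 : n - r (t - i) = (n - r (t + 1 - i)) + δ i := by omega
  unfold posA
  rw [h1, h4, ← Nat.add_assoc, Nat.mod_add_mod]

lemma M_step_le {i : ℕ} (hi : i + 1 ≤ t) :
    MA q n t r (i + 1) ≤ MA q n t r i * q ^ δ i := by
  have hq1 : 1 ≤ q := by have := C.hq; omega
  rw [MA, MA, Finset.sum_mul]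
  apply Finset.sum_le_sum
  intro j hj
  rw [← pow_add, C.pos_step hi j]
  exact Nat.pow_le_pow_right hq1 (Nat.mod_le _ _)

lemma M_step_dvd {i : ℕ} (hi : i + 1 ≤ t) :
    (q ^ n - 1) ∣ (MA q n t r i * q ^ δ i - MA q n t r (i + 1)) := by
  have hq1 : 1 ≤ q := by have := C.hq; omega
  rw [MA, MA, Finset.sum_mul]
  have hterm : ∀ j ∈ Finset.range (t + 1),
      q ^ posA n t r (i+1) j ≤ q ^ posA n t r i j * q ^ δ i := by
    intro j hj
    rw [← pow_add, C.pos_step hi j]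
    exact Nat.pow_le_pow_right hq1 (Nat.mod_le _ _)
  rw [← Finset.sum_tsub_distrib _ hterm]
  apply Finset.dvd_sum
  intro j hj
  rw [← pow_add, C.pos_step hi j]
  set e := posA n t r i j + δ i with he
  have hdecomp : e = n * (e / n) + e % n := (Nat.div_add_mod e n).symm
  have h1 : q ^ e = q ^ (e % n) * (q ^ n) ^ (e / n) := by
    conv_lhs => rw [hdecomp]
    rw [pow_add, pow_mul]
    ring
  have h2 : q ^ e - q ^ (e % n) = q ^ (e % n) * ((q ^ n) ^ (e / n) - 1) := by
    rw [Nat.mul_sub, Nat.mul_one, ← h1]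
  rw [h2]
  apply Dvd.dvd.mul_left
  have := Nat.sub_dvd_pow_sub_pow (q ^ n) 1 (e / n)
  simpa using this

lemma r_sub : ∀ i l : ℕ, i + l ≤ t →
    r (t - i) = r (t - i - l) + ∑ k ∈ Finset.range l, δ (i + 1 + k) := by
  intro i l
  induction l with
  | zero => simp
  | succ l ih =>
    intro hl
    have h1 := ih (by omega)
    have h2 := C.δ_add (i + l + 1) (by omega)
    have h3 : t - (i + l + 1) = t - i - (l + 1) := by omega
    have h4 : t + 1 - (i + l + 1) = t - i - l := by omega
    rw [h3, h4] at h2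
    rw [Finset.sum_range_succ]
    have h5 : i + 1 + l = i + l + 1 := by omega
    rw [h5]
    omega

lemma fseq_eq {F : Type*} [Field F] (f0 : Polynomial F)
    (hf0 : f0 = Polynomial.X ^ (∑ j ∈ Finset.range (t + 1), q ^ r j)) :
    ∀ i ≤ t, fseq q n f0 δ i = Polynomial.X ^ (MA q n t r i) := by
  intro i
  induction i with
  | zero =>
    intro _
    have hM0 : MA q n t r 0 = ∑ j ∈ Finset.range (t + 1), q ^ r j := by
      unfold MA
      apply Finset.sum_congr rfl
      intro j hj
      congr 1
      unfold posA
      rw [Nat.sub_zero, C.hrt, Nat.sub_self, Nat.add_zero,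
        Nat.mod_eq_of_lt (C.r_lt_n j (Nat.lt_succ_iff.mp (Finset.mem_range.mp hj)))]
    rw [hM0, show fseq q n f0 δ 0 = f0 from rfl, hf0]
  | succ i ih =>
    intro hi
    have hQ : 2 ≤ q ^ n := Nat.one_lt_pow (by have := C.hn; omega) (by have := C.hq; omega)
    rw [show fseq q n f0 δ (i+1)
        = (fseq q n f0 δ i ^ q ^ δ i) %ₘ (Polynomial.X ^ q ^ n - Polynomial.X) from rfl,
      ih (by omega), ← pow_mul]
    exact aux_X_pow_modByMonic (q ^ n) hQ _ _ (C.M_pos (i+1)) (C.M_lt_Q hi)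
      (C.M_step_le hi) (C.M_step_dvd hi)

lemma M_top : MA q n t r t * q ^ (δ t - 1)
    = (∑ j ∈ Finset.Icc 1 t, q ^ (r j - 1)) + q ^ (n - 1) := by
  have e1 : t + 1 - t = 1 := by omega
  have e2 : t - t = 0 := by omega
  have hδt : δ t = r 1 := by
    have h := C.hδ t le_rfl
    rw [e1, e2, C.hr0] at h
    omega
  have hr1 : 1 ≤ r 1 := by
    have h := C.hrmono 0 (by omega)
    rw [C.hr0] at h
    have h' : 0 < r 1 := by simpa using h
    omega
  have hr1n : r 1 ≤ n := C.r_le_n 1 (by omega)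
  unfold MA
  rw [Finset.sum_mul]
  simp_rw [← pow_add]
  rw [Finset.sum_range_succ']
  have hpos0 : posA n t r t 0 + r 1 = n := by
    have := C.pos_low (i := t) le_rfl (by omega : 0 ≤ t - t)
    rw [e1, C.hr0] at this
    omega
  have h0 : posA n t r t 0 + (δ t - 1) = n - 1 := by omega
  rw [h0]
  have hIcc : ∑ j ∈ Finset.Icc 1 t, q ^ (r j - 1)
      = ∑ i ∈ Finset.range t, q ^ (r (1 + i) - 1) := by
    rw [← Finset.Ico_add_one_right_eq_Icc, Finset.sum_Ico_eq_sum_range]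
    simp
  rw [hIcc]
  congr 1
  apply Finset.sum_congr rfl
  intro i hi
  have hit : i < t := Finset.mem_range.mp hi
  congr 1
  have hp : posA n t r t (i + 1) + r 1 = r (i + 1) := by
    have := C.pos_high' (i := t) le_rfl (by omega : t - t < i + 1) (by omega)
    rw [e1] at this
    omega
  have : 1 + i = i + 1 := by omega
  rw [this]
  have hr2 : 1 ≤ r (i + 1) := by
    have := C.r_le 1 (i + 1) (by omega) (by omega)
    omega
  omega

lemma δ_top : δ t = r 1 := by
  have e1 : t + 1 - t = 1 := by omega
  have e2 : t - t = 0 := by omega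
  have h := C.hδ t le_rfl
  rw [e1, e2, C.hr0] at h
  omega

lemma r1_pos : 1 ≤ r 1 := by
  have h := C.hrmono 0 (by omega)
  rw [C.hr0] at h
  have h' : 0 < r 1 := by simpa using h
  omega

lemma M_le_top {i : ℕ} (hi : i ≤ t)
    (hδmono : ∀ a b, a ≤ b → b ≤ t → δ a ≤ δ b) :
    MA q n t r i * q ^ (δ i - 1) ≤ MA q n t r t * q ^ (δ t - 1) := by
  have hq1 : 1 ≤ q := by have := C.hq; omega
  have hδt := C.δ_top
  have hr1 := C.r1_pos
  have e1 : t + 1 - t = 1 := by omega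
  have e2 : t - t = 0 := by omega
  unfold MA
  rw [Finset.sum_mul, Finset.sum_mul]
  simp_rw [← pow_add]
  have hL : ∑ l ∈ Finset.range (t+1),
          q ^ (posA n t r i (if l ≤ t - i then t - i - l else 2*t+1-i-l) + (δ i - 1))
      = ∑ j ∈ Finset.range (t+1), q ^ (posA n t r i j + (δ i - 1)) := by
    apply Finset.sum_nbij' (i := fun l => if l ≤ t - i then t - i - l else 2*t+1-i-l)
      (j := fun j => if j ≤ t - i then t - i - j else 2*t+1-i-j)
    · intro a ha
      simp only [Finset.mem_range] at *
      split <;> omega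
    · intro a ha
      simp only [Finset.mem_range] at *
      split <;> omega
    · intro a ha
      simp only [Finset.mem_range] at ha
      split <;> split <;> omega
    · intro a ha
      simp only [Finset.mem_range] at ha
      split <;> split <;> omega
    · intro a ha
      exact rfl
  have hR : ∑ l ∈ Finset.range (t+1),
          q ^ (posA n t r t (if l = 0 then 0 else t+1-l) + (δ t - 1))
      = ∑ j ∈ Finset.range (t+1), q ^ (posA n t r t j + (δ t - 1)) := by
    apply Finset.sum_nbij' (i := fun l => if l = 0 then 0 else t+1-l)
      (j := fun j => if j = 0 then 0 else t+1-j)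
    · intro a ha
      simp only [Finset.mem_range] at *
      split <;> omega
    · intro a ha
      simp only [Finset.mem_range] at *
      split <;> omega
    · intro a ha
      simp only [Finset.mem_range] at ha
      split <;> split <;> omega
    · intro a ha
      simp only [Finset.mem_range] at ha
      split <;> split <;> omega
    · intro a ha
      exact rfl
  rw [← hL, ← hR]
  apply Finset.sum_le_sum
  intro l hl
  have hlt : l ≤ t := Nat.lt_succ_iff.mp (Finset.mem_range.mp hl)
  apply Nat.pow_le_pow_right hq1
  have hδi1 := C.δ_pos i hi
  have hδt1 := C.δ_pos t le_rfl
  by_cases hl0 : l = 0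
  · subst hl0
    rw [if_pos rfl, if_pos (by omega : 0 ≤ t - i)]
    have h1 : posA n t r i (t - i - 0) + δ i = n := by
      rw [Nat.sub_zero]; exact C.pos_top hi
    have h2 : posA n t r t 0 + r 1 = n := by
      have h := C.pos_low (i := t) le_rfl (by omega : 0 ≤ t - t)
      rw [e1, C.hr0] at h
      omega
    omega
  · rw [if_neg hl0]
    have hτ : posA n t r t (t + 1 - l) + r 1 = r (t + 1 - l) := by
      have h := C.pos_high' (i := t) (j := t + 1 - l) le_rfl (by omega) (by omega)
      rw [e1] at h
      omega
    have hS2 := C.rδ_sum l (by omega)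
    by_cases hli : l ≤ t - i
    · rw [if_pos hli]
      have hσ : posA n t r i (t - i - l) + r (t + 1 - i) = r (t - i - l) + n :=
        C.pos_low hi (by omega)
      have hadd := C.δ_add i hi
      have hsub := C.r_sub i l (by omega)
      have hcmp : ∑ k ∈ Finset.range l, δ k ≤ ∑ k ∈ Finset.range l, δ (i + 1 + k) := by
        apply Finset.sum_le_sum
        intro k hk
        have hkl : k < l := Finset.mem_range.mp hk
        exact hδmono k (i + 1 + k) (by omega) (by omega)
      have hub : r (t + 1 - l) ≤ n := C.r_le_n _ (by omega)
      omega
    · rw [if_neg hli]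
      set m := i + l - t with hm
      have hm1 : 1 ≤ m := by omega
      have hσ : posA n t r i (2*t+1-i-l) + r (t + 1 - i) = r (2*t+1-i-l) :=
        C.pos_high' hi (by omega) (by omega)
      have hadd := C.δ_add i hi
      have hsub := C.r_sub (m - 1) (i + 1 - m) (by omega)
      have hj1 : t - (m - 1) = 2*t+1-i-l := by omega
      have hj2 : t - (m - 1) - (i + 1 - m) = t - i := by omega
      have hm2 : m - 1 + 1 = m := by omega
      rw [hj2, hj1] at hsub
      simp only [hm2] at hsub
      -- hsub : r (2*t+1-i-l) = r (t - i) + ∑ k ∈ range (i+1-m), δ (m + k)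
      have hStot : ∑ k ∈ Finset.range (t+1), δ k = n := by
        have h := C.rδ_sum (t+1) le_rfl
        rw [Nat.sub_self, C.hr0] at h
        omega
      have hsplit : ∑ k ∈ Finset.range (t+1), δ k
          = ∑ k ∈ Finset.range l, δ k + ∑ k ∈ Finset.range (t+1-l), δ (l + k) := by
        rw [Finset.range_eq_Ico, ← Finset.sum_Ico_consecutive δ (by omega : 0 ≤ l) (by omega : l ≤ t+1),
          Finset.sum_Ico_eq_sum_range, Finset.sum_Ico_eq_sum_range]
        simp
      have hc : i + 1 - m = t + 1 - l := by omega
      rw [hc] at hsub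
      have hcmp : ∑ k ∈ Finset.range (t+1-l), δ (m + k) ≤ ∑ k ∈ Finset.range (t+1-l), δ (l + k) := by
        apply Finset.sum_le_sum
        intro k hk
        have hkl : k < t + 1 - l := Finset.mem_range.mp hk
        exact hδmono (m + k) (l + k) (by omega) (by omega)
      have hub : r (t + 1 - l) ≤ n := C.r_le_n _ (by omega)
      omega

end Ctx


open Classical in
/-- with `0 = r₀ < r₁ < ⋯ < r_t < r_{t+1} = n`,
`δᵢ = r_{t+1−i} − r_{t−i}`, `f₀(x) = x^{1+q^{r₁}+⋯+q^{r_t}}`,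
`fᵢ = f_{i−1}^{q^{δ_{i−1}}} mod (x^{q^n} − x)`, and `I` the set of minimal indices of
the distinct `fᵢ`, if `δ₀ ≤ δ₁ ≤ ⋯ ≤ δ_t` then
`f = ∑_{e ∈ I} T_{δ_e}(f_e)` has degree `q^{r₁−1} + ⋯ + q^{r_t−1} + q^{n−1}`. -/
theorem stmt_14 (p e₀ : ℕ) [Fact p.Prime] (he : 0 < e₀) (q : ℕ) (hq : q = p ^ e₀)
    (n t : ℕ) (hn : 2 ≤ n)
    (r : ℕ → ℕ) (hr0 : r 0 = 0) (hrt : r (t + 1) = n)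
    (hrmono : ∀ j ≤ t, r j < r (j + 1))
    (F : Type*) [Field F] [CharP F p]
    (δ : ℕ → ℕ) (hδ : ∀ i ≤ t, δ i = r (t + 1 - i) - r (t - i))
    (hδmono : ∀ i j, i ≤ j → j ≤ t → δ i ≤ δ j)
    (f0 : Polynomial F) (hf0 : f0 = Polynomial.X ^ (∑ j ∈ Finset.range (t + 1), q ^ r j))
    (I : Finset ℕ)
    (hI : I = (Finset.range (t + 1)).filter
      (fun i => ∀ j < i, fseq q n f0 δ j ≠ fseq q n f0 δ i))
    (f : Polynomial F)
    (hf : f = ∑ i ∈ I, ∑ j ∈ Finset.range (δ i), (fseq q n f0 δ i) ^ q ^ j) :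
    f.natDegree = (∑ j ∈ Finset.Icc 1 t, q ^ (r j - 1)) + q ^ (n - 1) := by
  have hq2 : 2 ≤ q := by
    rw [hq]
    exact Nat.one_lt_pow (by omega) (Fact.out : p.Prime).one_lt
  have C : Ctx q n t r δ := ⟨hq2, by omega, hr0, hrt, hrmono, hδ⟩
  have hfs : ∀ i ≤ t, fseq q n f0 δ i = Polynomial.X ^ (MA q n t r i) := C.fseq_eq f0 hf0
  set D := (∑ j ∈ Finset.Icc 1 t, q ^ (r j - 1)) + q ^ (n - 1) with hD
  have hmemI : ∀ i, i ∈ I ↔ (i ≤ t ∧ ∀ j < i, fseq q n f0 δ j ≠ fseq q n f0 δ i) := by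
    intro i
    rw [hI, Finset.mem_filter, Finset.mem_range]
    constructor
    · rintro ⟨h1, h2⟩; exact ⟨by omega, h2⟩
    · rintro ⟨h1, h2⟩; exact ⟨by omega, h2⟩
  -- the minimal index with the same fseq as t
  have hex : ∃ i, i ≤ t ∧ fseq q n f0 δ i = fseq q n f0 δ t := ⟨t, le_rfl, rfl⟩
  obtain ⟨i₀, hi₀t, hi₀eq, hi₀min⟩ :
      ∃ i₀, i₀ ≤ t ∧ fseq q n f0 δ i₀ = fseq q n f0 δ t ∧
        ∀ j < i₀, ¬(j ≤ t ∧ fseq q n f0 δ j = fseq q n f0 δ t) :=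
    ⟨Nat.find hex, (Nat.find_spec hex).1, (Nat.find_spec hex).2,
      fun j hj => Nat.find_min hex hj⟩
  have hi₀I : i₀ ∈ I := by
    rw [hmemI]
    refine ⟨hi₀t, fun j hj heq => ?_⟩
    exact hi₀min j hj ⟨by omega, heq.trans hi₀eq⟩
  have hMeq : MA q n t r i₀ = MA q n t r t := by
    have h := hi₀eq
    rw [hfs i₀ hi₀t, hfs t le_rfl] at h
    simpa using congrArg Polynomial.natDegree h
  have hδeq : δ i₀ = δ t := by
    by_cases hit : i₀ = t
    · rw [hit]
    · have hAB : (Finset.range (t+1)).image (posA n t r i₀)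
          = (Finset.range (t+1)).image (posA n t r t) := by
        apply aux_sum_pow_inj q hq2 n
        · intro x hx
          obtain ⟨j, _, hj⟩ := Finset.mem_image.mp hx
          exact hj ▸ C.pos_lt i₀ j
        · intro x hx
          obtain ⟨j, _, hj⟩ := Finset.mem_image.mp hx
          exact hj ▸ C.pos_lt t j
        · rw [Finset.sum_image (fun a ha b hb hab =>
              C.pos_inj (Nat.lt_succ_iff.mp (Finset.mem_range.mp ha))
                (Nat.lt_succ_iff.mp (Finset.mem_range.mp hb)) hab),
            Finset.sum_image (fun a ha b hb hab =>
              C.pos_inj (Nat.lt_succ_iff.mp (Finset.mem_range.mp ha))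
                (Nat.lt_succ_iff.mp (Finset.mem_range.mp hb)) hab)]
          exact hMeq
      have htopA := C.pos_top hi₀t
      have htop : n - δ i₀ ∈ (Finset.range (t+1)).image (posA n t r i₀) :=
        Finset.mem_image.mpr ⟨t - i₀, Finset.mem_range.mpr (by omega), by omega⟩
      rw [hAB] at htop
      obtain ⟨j, hjmem, hjeq⟩ := Finset.mem_image.mp htop
      have hjt : j ≤ t := Nat.lt_succ_iff.mp (Finset.mem_range.mp hjmem)
      have e1 : t + 1 - t = 1 := by omega
      have hδi₀t : δ i₀ ≤ δ t := hδmono i₀ t hi₀t le_rfl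
      have hδtop := C.δ_top
      by_cases hj0 : j = 0
      · subst hj0
        have h2 : posA n t r t 0 + r 1 = n := by
          have h := C.pos_low (i := t) le_rfl (by omega : 0 ≤ t - t)
          rw [e1, C.hr0] at h
          omega
        omega
      · have h2 : posA n t r t j + r 1 = r j := by
          have h := C.pos_high' (i := t) (j := j) le_rfl (by omega) hjt
          rw [e1] at h
          omega
        have h3 : r j < n := C.r_lt_n j hjt
        have h4 := C.r1_pos
        omega
  have hDtop : MA q n t r i₀ * q ^ (δ i₀ - 1) = D := by
    rw [hMeq, hδeq, C.M_top]
  -- rewrite f as a sum of monomials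
  have hfX : f = ∑ i ∈ I, ∑ j ∈ Finset.range (δ i),
      Polynomial.X ^ (MA q n t r i * q ^ j) := by
    rw [hf]
    apply Finset.sum_congr rfl
    intro i hiI
    have hit : i ≤ t := ((hmemI i).mp hiI).1
    apply Finset.sum_congr rfl
    intro j _
    rw [hfs i hit, ← pow_mul]
  have hq1 : 1 ≤ q := by omega
  have hDge : q ^ (n - 1) ≤ D := Nat.le_add_left _ _
  have hsmall : ∀ i ≤ t, ∀ j, j + 1 < δ i → MA q n t r i * q ^ j < D := by
    intro i hit j hj
    have h1 := C.M_lt_pow hit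
    have h2 : MA q n t r i * q ^ j < q ^ (n + 1 - δ i) * q ^ j :=
      (Nat.mul_lt_mul_right (pow_pos (by omega) j)).mpr h1
    have hδn : δ i ≤ n := by
      have := C.pos_top hit
      omega
    have h3 : q ^ (n + 1 - δ i) * q ^ j ≤ q ^ (n - 1) := by
      rw [← pow_add]
      exact Nat.pow_le_pow_right hq1 (by omega)
    omega
  -- uniqueness of the top term
  have huniq : ∀ i ∈ I, ∀ j < δ i, MA q n t r i * q ^ j = D → i = i₀ ∧ j = δ i - 1 := by
    intro i hiI j hjδ heq
    have hit : i ≤ t := ((hmemI i).mp hiI).1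
    have hj : j = δ i - 1 := by
      by_contra hne
      exact absurd heq (Nat.ne_of_lt (hsmall i hit j (by omega)))
    subst hj
    refine ⟨?_, rfl⟩
    have heq2 : MA q n t r i * q ^ (δ i - 1) = MA q n t r i₀ * q ^ (δ i₀ - 1) := by
      rw [heq, hDtop]
    have hδpos_i := C.δ_pos i hit
    have hδpos_i₀ := C.δ_pos i₀ hi₀t
    rcases lt_trichotomy (δ i) (δ i₀) with hlt | heqδ | hgt
    · exfalso
      have hsplit : δ i₀ - 1 = (δ i₀ - δ i) + (δ i - 1) := by omega
      rw [hsplit, pow_add, ← Nat.mul_assoc] at heq2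
      have hMeq2 : MA q n t r i = MA q n t r i₀ * q ^ (δ i₀ - δ i) :=
        Nat.eq_of_mul_eq_mul_right (pow_pos (by omega) _) heq2
      have hdvd : q ∣ MA q n t r i := by
        rw [hMeq2]
        exact Dvd.dvd.mul_left (dvd_pow_self q (by omega)) _
      have := C.M_mod hit
      omega
    · have hMeq2 : MA q n t r i = MA q n t r i₀ := by
        rw [heqδ] at heq2
        exact Nat.eq_of_mul_eq_mul_right (pow_pos (by omega) _) heq2
      have hfeq : fseq q n f0 δ i = fseq q n f0 δ i₀ := by
        rw [hfs i hit, hfs i₀ hi₀t, hMeq2]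
      by_contra hne
      rcases lt_trichotomy i i₀ with h | h | h
      · exact hi₀min i h ⟨by omega, hfeq.trans hi₀eq⟩
      · exact hne h
      · exact ((hmemI i).mp hiI).2 i₀ h hfeq.symm
    · exfalso
      have hsplit : δ i - 1 = (δ i - δ i₀) + (δ i₀ - 1) := by omega
      rw [hsplit, pow_add, ← Nat.mul_assoc] at heq2
      have hMeq2 : MA q n t r i * q ^ (δ i - δ i₀) = MA q n t r i₀ :=
        Nat.eq_of_mul_eq_mul_right (pow_pos (by omega) _) heq2
      have hdvd : q ∣ MA q n t r i₀ := by
        rw [← hMeq2]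
        exact Dvd.dvd.mul_left (dvd_pow_self q (by omega)) _
      have := C.M_mod hi₀t
      omega
  -- coefficient of D is 1
  have hco : f.coeff D = 1 := by
    rw [hfX]
    rw [Polynomial.finset_sum_coeff]
    have hinner : ∀ i ∈ I, (∑ j ∈ Finset.range (δ i),
        Polynomial.X ^ (MA q n t r i * q ^ j) : Polynomial F).coeff D
        = ∑ j ∈ Finset.range (δ i), if D = MA q n t r i * q ^ j then (1:F) else 0 := by
      intro i _
      rw [Polynomial.finset_sum_coeff]
      apply Finset.sum_congr rfl
      intro j _
      rw [Polynomial.coeff_X_pow]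
    rw [Finset.sum_congr rfl hinner]
    rw [Finset.sum_eq_single i₀]
    · rw [Finset.sum_eq_single (δ i₀ - 1)]
      · rw [if_pos hDtop.symm]
      · intro j hj hne
        rw [if_neg]
        intro hc
        exact hne (huniq i₀ hi₀I j (Finset.mem_range.mp hj) hc.symm).2
      · intro hmem
        have := C.δ_pos i₀ hi₀t
        exact absurd (Finset.mem_range.mpr (by omega : δ i₀ - 1 < δ i₀)) hmem
    · intro i hiI hne
      apply Finset.sum_eq_zero
      intro j hj
      rw [if_neg]
      intro hc
      exact hne (huniq i hiI j (Finset.mem_range.mp hj) hc.symm).1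
    · intro h
      exact absurd hi₀I h
  have hub : f.natDegree ≤ D := by
    rw [hfX]
    apply Polynomial.natDegree_sum_le_of_forall_le
    intro i hiI
    apply Polynomial.natDegree_sum_le_of_forall_le
    intro j hj
    rw [Polynomial.natDegree_X_pow]
    have hit : i ≤ t := ((hmemI i).mp hiI).1
    have hjδ : j < δ i := Finset.mem_range.mp hj
    calc MA q n t r i * q ^ j ≤ MA q n t r i * q ^ (δ i - 1) :=
          Nat.mul_le_mul_left _ (Nat.pow_le_pow_right hq1 (by omega))
      _ ≤ MA q n t r t * q ^ (δ t - 1) := C.M_le_top hit hδmono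
      _ = D := C.M_top
  have hlb : D ≤ f.natDegree := by
    apply Polynomial.le_natDegree_of_ne_zero
    rw [hco]
    exact one_ne_zero
  omega
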